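/- The measure ℙ† defined from the family (P†_s : s ∈ S) and a strictly positive vector π† = (π†_s : s ∈ S) by ℙ†(B) = ∑_{s∈S} π†_s ∑_{n≥0} P†_s({𝒯 > n} ∩ Θ_n^{-1}B) is a probability measure on K^ℕ if and only if ∑_{s∈S} π†_s · E†_s(𝒯) = 1, where E†_s denotes expectation under P†_s. Consequently, there exists a strictly positive vector π† making ℙ† a probability measure if and only if E†_s(𝒯) < ∞ for every s ∈ S. -/

import Mathlib

open MeasureTheory Filter
open scoped ENNReal NNReal ENat

variable {I : Type*} [MeasurableSpace I]

/-- The shift map `Θ_q` on `K^ℕ` where `K = I × ℝ`. -/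
def shiftK (q : ℕ) (w : ℕ → I × ℝ) : ℕ → I × ℝ := fun n => w (n + q)

/-- The hitting time of a different class in the random model:
`𝒯(w) = inf {n > 0 : 𝒳_n(w) ∈ V \ 𝒞(𝒳_0(w))}` (with `inf ∅ = ∞`), where
`V = ⋃_{s ∈ S} {s} × R_s` and `𝒞(s, r) = ⋃_{s' ∈ C(s)} {s'} × R_{s'}`. -/
noncomputable def hitTK (S : Finset I) (sim : I → I → Prop) (Rs : I → Set ℝ)
    (w : ℕ → I × ℝ) : ℕ∞ :=
  sInf ((fun n : ℕ => (n : ℕ∞)) ''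
    {n : ℕ | 0 < n ∧ (w n).1 ∈ S ∧ (w n).2 ∈ Rs ((w n).1) ∧ ¬ sim ((w 0).1) ((w n).1)})

/-- The expectation `E(𝒯)` of the hitting time `𝒯` under `P`. -/
noncomputable def hitETK (S : Finset I) (sim : I → I → Prop) (Rs : I → Set ℝ)
    (P : Measure (ℕ → I × ℝ)) : ℝ≥0∞ :=
  ∫⁻ w, (hitTK S sim Rs w : ℝ≥0∞) ∂P

/-- The measure `ℙ†(B) = ∑_{s ∈ S} π†_s ∑_{n ≥ 0} P†_s({𝒯 > n} ∩ Θ_n⁻¹ B)` on `K^ℕ`. -/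
noncomputable def lawPK (S : Finset I) (sim : I → I → Prop) (Rs : I → Set ℝ) (π : I → ℝ≥0)
    (Pd : I → Measure (ℕ → I × ℝ)) : Measure (ℕ → I × ℝ) :=
  ∑ s ∈ S, π s •
    Measure.sum
      (fun n : ℕ => ((Pd s).restrict {w | (n : ℕ∞) < hitTK S sim Rs w}).map (shiftK n))

/-- The hitting time of a different class on `I^ℕ`:
`T(x) = inf {n > 0 : x n ∈ S \ C(x 0)}` (with `inf ∅ = ∞`). -/
noncomputable def hitT (S : Finset I) (sim : I → I → Prop) (x : ℕ → I) : ℕ∞ :=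
  sInf ((fun n : ℕ => (n : ℕ∞)) '' {n : ℕ | 0 < n ∧ x n ∈ S ∧ ¬ sim (x 0) (x n)})

set_option linter.unusedSectionVars false
set_option linter.unusedVariables false

lemma hitTK_lt_iff (S : Finset I) (sim : I → I → Prop) (Rs : I → Set ℝ)
    (w : ℕ → I × ℝ) (n : ℕ) :
    (n : ℕ∞) < hitTK S sim Rs w ↔
      ∀ k ≤ n, ¬ (0 < k ∧ (w k).1 ∈ S ∧ (w k).2 ∈ Rs ((w k).1) ∧
        ¬ sim ((w 0).1) ((w k).1)) := by
  constructor
  · intro h k hk hmem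
    have h2 : hitTK S sim Rs w ≤ (k : ℕ∞) := sInf_le ⟨k, hmem, rfl⟩
    have h3 : (n : ℕ∞) < (k : ℕ∞) := lt_of_lt_of_le h h2
    exact absurd hk (not_le.mpr (by exact_mod_cast h3))
  · intro h
    have h1 : ((n : ℕ∞) + 1) ≤ hitTK S sim Rs w := by
      refine le_sInf ?_
      rintro m ⟨k, hk, rfl⟩
      have hnk : n < k := by
        by_contra hle
        exact h k (not_lt.mp hle) hk
      show ((n:ℕ∞) + 1) ≤ (k : ℕ∞)
      have : ((n+1 : ℕ) : ℕ∞) ≤ (k : ℕ∞) := by exact_mod_cast Nat.succ_le_of_lt hnk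
      simpa using this
    calc (n : ℕ∞) < (n : ℕ∞) + 1 := by exact_mod_cast Nat.lt_succ_self n
      _ ≤ _ := h1

lemma one_le_hitTK (S : Finset I) (sim : I → I → Prop) (Rs : I → Set ℝ)
    (w : ℕ → I × ℝ) : 1 ≤ hitTK S sim Rs w := by
  refine le_sInf ?_
  rintro m ⟨k, hk, rfl⟩
  show (1 : ℕ∞) ≤ (k : ℕ∞)
  exact_mod_cast hk.1

lemma measurableSet_hitTK_gt [Fintype I] [MeasurableSingletonClass I]
    (S : Finset I) (sim : I → I → Prop) (Rs : I → Set ℝ)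
    (hRmeas : ∀ s ∈ S, MeasurableSet (Rs s)) (n : ℕ) :
    MeasurableSet {w : ℕ → I × ℝ | (n : ℕ∞) < hitTK S sim Rs w} := by
  have hset : {w : ℕ → I × ℝ | (n : ℕ∞) < hitTK S sim Rs w} =
      ⋂ k, ⋂ (_ : k ≤ n), (⋃ (i : I), ⋃ (j : I),
        ⋃ (_ : 0 < k ∧ i ∈ S ∧ ¬ sim j i),
          ({w : ℕ → I × ℝ | (w 0).1 = j} ∩ {w | (w k).1 = i} ∩
            {w | (w k).2 ∈ Rs i}))ᶜ := by
    ext w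
    simp only [Set.mem_setOf_eq, hitTK_lt_iff, Set.mem_iInter, Set.mem_compl_iff,
      Set.mem_iUnion, Set.mem_inter_iff, Set.mem_setOf_eq]
    constructor
    · rintro h k hk ⟨i, j, ⟨hpos, hiS, hsim⟩, ⟨hj, hi⟩, hR⟩
      exact h k hk ⟨hpos, hi ▸ hiS, hi ▸ hR, by rw [hj, hi]; exact hsim⟩
    · rintro h k hk ⟨hpos, hiS, hR, hsim⟩
      exact h k hk ⟨(w k).1, (w 0).1, ⟨hpos, hiS, hsim⟩, ⟨rfl, rfl⟩, hR⟩
  rw [hset]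
  refine MeasurableSet.iInter fun k => MeasurableSet.iInter fun _ => MeasurableSet.compl ?_
  refine MeasurableSet.iUnion fun i => MeasurableSet.iUnion fun j =>
    MeasurableSet.iUnion fun h => ?_
  have h0 : Measurable fun w : ℕ → I × ℝ => (w 0).1 := (measurable_pi_apply 0).fst
  have hk1 : Measurable fun w : ℕ → I × ℝ => (w k).1 := (measurable_pi_apply k).fst
  have hk2 : Measurable fun w : ℕ → I × ℝ => (w k).2 := (measurable_pi_apply k).snd
  exact ((h0 (measurableSet_singleton j)).inter (hk1 (measurableSet_singleton i))).inter
    (hk2 (hRmeas i h.2.1))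

lemma enat_toENNReal_tsum (a : ℕ∞) :
    (a : ℝ≥0∞) = ∑' n : ℕ, if (n : ℕ∞) < a then (1 : ℝ≥0∞) else 0 := by
  cases a with
  | top =>
    have h1 : ∀ n : ℕ, (if (n : ℕ∞) < (⊤ : ℕ∞) then (1 : ℝ≥0∞) else 0) = 1 := fun n =>
      if_pos (lt_top_iff_ne_top.mpr (ENat.coe_ne_top n))
    rw [tsum_congr h1, ENNReal.tsum_const_eq_top_of_ne_zero one_ne_zero]
    exact ENat.toENNReal_top
  | coe m =>
    have h1 : ∀ n : ℕ, (if (n : ℕ∞) < (m : ℕ∞) then (1 : ℝ≥0∞) else 0) =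
        if n < m then 1 else 0 := fun n => by simp [Nat.cast_lt]
    rw [tsum_congr h1, tsum_eq_sum (s := Finset.range m)
      (fun n hn => if_neg (by simpa using Finset.mem_range.not.mp hn))]
    rw [Finset.sum_congr rfl (fun n hn => if_pos (Finset.mem_range.mp hn)),
      Finset.sum_const, Finset.card_range, nsmul_eq_mul, mul_one, ENat.toENNReal_coe]

lemma hitETK_eq_tsum [Fintype I] [MeasurableSingletonClass I]
    (S : Finset I) (sim : I → I → Prop) (Rs : I → Set ℝ)
    (hRmeas : ∀ s ∈ S, MeasurableSet (Rs s)) (μ : Measure (ℕ → I × ℝ)) :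
    hitETK S sim Rs μ = ∑' n : ℕ, μ {w | (n : ℕ∞) < hitTK S sim Rs w} := by
  unfold hitETK
  have h1 : ∀ w, ((hitTK S sim Rs w : ℕ∞) : ℝ≥0∞) =
      ∑' n : ℕ, Set.indicator {w' | (n : ℕ∞) < hitTK S sim Rs w'}
        (fun _ => (1 : ℝ≥0∞)) w := by
    intro w
    rw [enat_toENNReal_tsum]
    exact tsum_congr fun n => by rw [Set.indicator_apply]; rfl
  rw [lintegral_congr h1, lintegral_tsum (fun n =>
    (measurable_const.indicator (measurableSet_hitTK_gt S sim Rs hRmeas n)).aemeasurable)]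
  exact tsum_congr fun n => by
    rw [lintegral_indicator_const (measurableSet_hitTK_gt S sim Rs hRmeas n), one_mul]

lemma lawPK_univ [Fintype I] [MeasurableSingletonClass I]
    (S : Finset I) (sim : I → I → Prop) (Rs : I → Set ℝ)
    (hRmeas : ∀ s ∈ S, MeasurableSet (Rs s)) (π : I → ℝ≥0)
    (Pd : I → Measure (ℕ → I × ℝ)) :
    lawPK S sim Rs π Pd Set.univ =
      ∑ s ∈ S, (π s : ℝ≥0∞) * hitETK S sim Rs (Pd s) := by
  have hshift : ∀ q : ℕ, Measurable (shiftK (I := I) q) := fun q =>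
    measurable_pi_lambda _ fun n => measurable_pi_apply (n + q)
  rw [lawPK, Measure.finset_sum_apply]
  refine Finset.sum_congr rfl fun s hs => ?_
  rw [Measure.smul_apply, Measure.sum_apply _ MeasurableSet.univ, ENNReal.smul_def]
  congr 1
  rw [hitETK_eq_tsum S sim Rs hRmeas]
  refine tsum_congr fun n => ?_
  rw [Measure.map_apply (hshift n) MeasurableSet.univ, Set.preimage_univ,
    Measure.restrict_apply_univ]

/-- For a fixed strictly positive weight vector `π†`, the measure `ℙ†` is a probability
measure iff `∑_{s ∈ S} π†_s E†_s(𝒯) = 1`; consequently there is some strictly positive `π†`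
making `ℙ†` a probability measure iff `E†_s(𝒯) < ∞` for every `s ∈ S`. -/
theorem stmt_15 [Fintype I] [DecidableEq I] [MeasurableSingletonClass I]
    (S : Finset I) (hS : S.Nonempty) (hSc : ∃ i : I, i ∉ S)
    (sim : I → I → Prop) (hsim : Equivalence sim)
    (Rs : I → Set ℝ) (hRmeas : ∀ s ∈ S, MeasurableSet (Rs s))
    (hRsub : ∀ s ∈ S, Rs s ⊆ Set.Icc (0 : ℝ) 1)
    (hRpos : ∀ s ∈ S, 0 < volume (Rs s))
    (P : I → Measure (ℕ → I)) (hprob : ∀ s ∈ S, IsProbabilityMeasure (P s))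
    (hstart : ∀ s ∈ S, P s {x | x 0 = s} = 1)
    (hTfin : ∀ s ∈ S, P s {x | hitT S sim x < ⊤} = 1)
    (Pd : I → Measure (ℕ → I × ℝ)) (hdprob : ∀ s ∈ S, IsProbabilityMeasure (Pd s))
    (hcyl : ∀ s ∈ S, ∀ (m : ℕ) (i : ℕ → I) (R' : ℕ → Set ℝ),
      (∀ k ≤ m, MeasurableSet (R' k)) →
      Pd s {w | ∀ k ≤ m, (w k).1 = i k ∧ (w k).2 ∈ R' k} =
        (if i 0 = s then 1 else 0) * (volume (R' 0 ∩ Rs s) / volume (Rs s)) *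
          P s {x | ∀ k ≤ m, x k = i k} *
          ∏ k ∈ Finset.Icc 1 m, volume (R' k ∩ Set.Icc (0 : ℝ) 1))
    (hTKfin : ∀ s ∈ S, Pd s {w | hitTK S sim Rs w < ⊤} = 1) :
    (∀ π : I → ℝ≥0, (∀ s ∈ S, 0 < π s) →
      (IsProbabilityMeasure (lawPK S sim Rs π Pd) ↔
        ∑ s ∈ S, (π s : ℝ≥0∞) * hitETK S sim Rs (Pd s) = 1)) ∧
    ((∃ π : I → ℝ≥0, (∀ s ∈ S, 0 < π s) ∧ IsProbabilityMeasure (lawPK S sim Rs π Pd)) ↔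
      ∀ s ∈ S, hitETK S sim Rs (Pd s) < ⊤) := by
  have key : ∀ π : I → ℝ≥0, lawPK S sim Rs π Pd Set.univ =
      ∑ s ∈ S, (π s : ℝ≥0∞) * hitETK S sim Rs (Pd s) := fun π =>
    lawPK_univ S sim Rs hRmeas π Pd
  have hE1 : ∀ s ∈ S, 1 ≤ hitETK S sim Rs (Pd s) := by
    intro s hs
    have := hdprob s hs
    calc (1 : ℝ≥0∞) = ∫⁻ _, 1 ∂(Pd s) := by simp
      _ ≤ hitETK S sim Rs (Pd s) := by
        refine lintegral_mono fun w => ?_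
        have := one_le_hitTK S sim Rs w
        simpa using ENat.toENNReal_le.mpr this
  have part1 : ∀ π : I → ℝ≥0, (∀ s ∈ S, 0 < π s) →
      (IsProbabilityMeasure (lawPK S sim Rs π Pd) ↔
        ∑ s ∈ S, (π s : ℝ≥0∞) * hitETK S sim Rs (Pd s) = 1) := by
    intro π _
    constructor
    · intro h
      rw [← key π]
      exact measure_univ
    · intro h
      exact ⟨by rw [key π, h]⟩
  refine ⟨part1, ?_, ?_⟩
  · rintro ⟨π, hπ, hprob'⟩ s hs
    have h1 : ∑ s ∈ S, (π s : ℝ≥0∞) * hitETK S sim Rs (Pd s) = 1 :=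
      (part1 π hπ).mp hprob'
    have h2 : (π s : ℝ≥0∞) * hitETK S sim Rs (Pd s) ≤ 1 := by
      rw [← h1]
      exact Finset.single_le_sum (f := fun s => (π s : ℝ≥0∞) * hitETK S sim Rs (Pd s)) (fun _ _ => zero_le) hs
    by_contra htop
    rw [not_lt, top_le_iff] at htop
    rw [htop, ENNReal.mul_top (by exact_mod_cast (hπ s hs).ne')] at h2
    exact absurd h2 (by simp)
  · intro hfin
    set A : ℝ≥0∞ := ∑ s ∈ S, hitETK S sim Rs (Pd s) with hA
    have hAtop : A ≠ ⊤ := (ENNReal.sum_lt_top.mpr fun s hs => hfin s hs).ne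
    have hA1 : 1 ≤ A := by
      obtain ⟨s0, hs0⟩ := hS
      exact le_trans (hE1 s0 hs0) (Finset.single_le_sum (f := fun s => hitETK S sim Rs (Pd s)) (fun _ _ => zero_le) hs0)
    have hA0 : A ≠ 0 := by
      intro h; rw [h] at hA1; exact absurd hA1 (by simp)
    have hAn0 : A.toNNReal ≠ 0 := by
      simp [ENNReal.toNNReal_eq_zero_iff, hA0, hAtop]
    refine ⟨fun _ => A.toNNReal⁻¹, fun s _ => ?_, ?_⟩
    · exact inv_pos.mpr (pos_iff_ne_zero.mpr hAn0)
    · rw [part1 _ (fun s _ => inv_pos.mpr (pos_iff_ne_zero.mpr hAn0))]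
      have hco : ((A.toNNReal⁻¹ : ℝ≥0) : ℝ≥0∞) = A⁻¹ := by
        rw [ENNReal.coe_inv hAn0, ENNReal.coe_toNNReal hAtop]
      calc ∑ s ∈ S, ((A.toNNReal⁻¹ : ℝ≥0) : ℝ≥0∞) * hitETK S sim Rs (Pd s)
          = A⁻¹ * A := by rw [← Finset.mul_sum, hco, ← hA]
        _ = 1 := ENNReal.inv_mul_cancel hA0 hAtop
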